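/- If I_k(M) is a principal ideal (generated by a single k×k minor det(M_{IJ})), then I_Δ^{k−1} · I_2((I_k(M))_D) ⊆ I_{2k}(M_D) at (x,x). -/

import Mathlib

/-- The generator matrix `[M_D] = [[M], 0; [M]', Δ·[M]']` of the double `M_D`. -/
def Lip.doubleMatrix {R S : Type*} [CommRing R] [CommRing S] {p r n : ℕ}
    (φ1 φ2 : R →+* S) (z : Fin n → R) (g : Fin r → (Fin p → R)) :
    Matrix (Fin p ⊕ Fin p) (Fin r ⊕ Fin n × Fin r) S :=
  fun i c =>
    match i, c with
    | Sum.inl i, Sum.inl j => φ1 (g j i)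
    | Sum.inr i, Sum.inl j => φ2 (g j i)
    | Sum.inl _, Sum.inr _ => 0
    | Sum.inr i, Sum.inr (a, j) => (φ1 (z a) - φ2 (z a)) * φ2 (g j i)

/-- The ideal `I_{2k}(M_D)` of `2k×2k` minors of the generator matrix of the double. -/
def Lip.I2k {R S : Type*} [CommRing R] [CommRing S] {p r n : ℕ}
    (φ1 φ2 : R →+* S) (z : Fin n → R) (g : Fin r → (Fin p → R)) (k : ℕ) : Ideal S :=
  Ideal.span {d : S | ∃ (RI : Fin (2 * k) → Fin p ⊕ Fin p)
      (CJ : Fin (2 * k) → Fin r ⊕ Fin n × Fin r),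
    d = Matrix.det (Matrix.of fun a b : Fin (2 * k) =>
      Lip.doubleMatrix φ1 φ2 z g (RI a) (CJ b))}

/-- The generator matrix of the double `(I_k(M))_D` of the minor ideal `I_k(M)`. -/
def Lip.minorDoubleMatrix {R S : Type*} [CommRing R] [CommRing S] {p r n : ℕ}
    (φ1 φ2 : R →+* S) (z : Fin n → R) (g : Fin r → (Fin p → R)) (k : ℕ) :
    Matrix (Fin 2) (((Fin k → Fin p) × (Fin k → Fin r)) ⊕
      (Fin n × ((Fin k → Fin p) × (Fin k → Fin r)))) S :=
  fun i c =>
    match i, c with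
    | 0, Sum.inl (I, J) => φ1 (Matrix.det (Matrix.of fun a b : Fin k => g (J b) (I a)))
    | 1, Sum.inl (I, J) => φ2 (Matrix.det (Matrix.of fun a b : Fin k => g (J b) (I a)))
    | 0, Sum.inr _ => 0
    | 1, Sum.inr (i, (K, L)) =>
        (φ1 (z i) - φ2 (z i)) * φ2 (Matrix.det (Matrix.of fun a b : Fin k => g (L b) (K a)))

/-- The ideal of `2×2` minors of a `2`-row matrix. -/
def Lip.I2 {S : Type*} [CommRing S] {ι : Type*} (E : Matrix (Fin 2) ι S) : Ideal S :=
  Ideal.span {d : S | ∃ c1 c2 : ι, d = E 0 c1 * E 1 c2 - E 0 c2 * E 1 c1}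

/-- Powers of a span of a range, times a principal ideal, land in the span of
products of `m` generators times the principal generator. -/
lemma aux_pow_span_le {S : Type*} [CommRing S] {ι : Type*} (f : ι → S) (G : S) :
    ∀ m : ℕ, (Ideal.span (Set.range f)) ^ m * Ideal.span {G}
      ≤ Ideal.span {s : S | ∃ i : Fin m → ι, s = (∏ b, f (i b)) * G} := by
  intro m
  induction m with
  | zero =>
      rw [pow_zero, one_mul, Ideal.span_le]
      rintro x rfl
      exact Ideal.subset_span ⟨Fin.elim0, by simp⟩
  | succ m ih =>
      have h1 : (Ideal.span (Set.range f)) ^ (m + 1) * Ideal.span {G}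
          = Ideal.span (Set.range f) * ((Ideal.span (Set.range f)) ^ m * Ideal.span {G}) := by
        ring
      rw [h1]
      refine le_trans (Ideal.mul_mono_right ih) ?_
      rw [Ideal.span_mul_span', Ideal.span_le]
      rintro x hx
      rcases hx with ⟨u, ⟨j0, rfl⟩, v, ⟨i, rfl⟩, rfl⟩
      refine Ideal.subset_span ⟨Fin.cons j0 i, ?_⟩
      simp only [Fin.prod_univ_succ, Fin.cons_zero, Fin.cons_succ]
      ring

/-- If `I_k(M)` is principal, generated by a single `k×k` minor `det M_{I₀J₀}`, then
`I_Δ^{k−1} · I_2((I_k(M))_D) ⊆ I_{2k}(M_D)`. The hypothesis `hz` expresses that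
`φ1 α − φ2 α` always lies in the diagonal ideal `I_Δ`, as holds for `O_{X×X}`. -/
theorem diagPow_mul_I2_le_I2k_of_principal {R S : Type*} [CommRing R] [CommRing S]
    {p r n k : ℕ} (φ1 φ2 : R →+* S) (z : Fin n → R) (g : Fin r → (Fin p → R))
    (hz : ∀ α : R, φ1 α - φ2 α ∈ Ideal.span (Set.range fun i => φ1 (z i) - φ2 (z i)))
    (I0 : Fin k → Fin p) (J0 : Fin k → Fin r)
    (hprin : Ideal.span {d : R | ∃ (I : Fin k → Fin p) (J : Fin k → Fin r),
        d = Matrix.det (Matrix.of fun a b : Fin k => g (J b) (I a))}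
      = Ideal.span {Matrix.det (Matrix.of fun a b : Fin k => g (J0 b) (I0 a))}) :
    (Ideal.span (Set.range fun i => φ1 (z i) - φ2 (z i))) ^ (k - 1) *
        Lip.I2 (Lip.minorDoubleMatrix φ1 φ2 z g k)
      ≤ Lip.I2k φ1 φ2 z g k := by
  set δ : Fin n → S := fun i => φ1 (z i) - φ2 (z i) with hδ
  set g0 : R := Matrix.det (Matrix.of fun a b : Fin k => g (J0 b) (I0 a)) with hg0
  set G : S := φ1 g0 * φ2 g0 with hG
  set IΔ : Ideal S := Ideal.span (Set.range δ) with hIΔ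
  -- every k×k minor is a multiple of g0
  have hminor : ∀ (I : Fin k → Fin p) (J : Fin k → Fin r),
      ∃ lam : R, lam * g0 = Matrix.det (Matrix.of fun a b : Fin k => g (J b) (I a)) := by
    intro I J
    have : Matrix.det (Matrix.of fun a b : Fin k => g (J b) (I a)) ∈
        Ideal.span {d : R | ∃ (I : Fin k → Fin p) (J : Fin k → Fin r),
          d = Matrix.det (Matrix.of fun a b : Fin k => g (J b) (I a))} :=
      Ideal.subset_span ⟨I, J, rfl⟩
    rw [hprin, Ideal.mem_span_singleton'] at this
    exact this
  -- Step 1 : I2 ≤ IΔ * span {G}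
  have step1 : Lip.I2 (Lip.minorDoubleMatrix φ1 φ2 z g k) ≤ IΔ * Ideal.span {G} := by
    rw [Lip.I2, Ideal.span_le]
    rintro d ⟨c1, c2, rfl⟩
    rcases c1 with ⟨I, J⟩ | ⟨i, K, L⟩ <;> rcases c2 with ⟨I', J'⟩ | ⟨i', K', L'⟩
    · -- inl inl
      obtain ⟨lam, hlam⟩ := hminor I J
      obtain ⟨mu, hmu⟩ := hminor I' J'
      have hd : Lip.minorDoubleMatrix φ1 φ2 z g k 0 (Sum.inl (I, J)) *
            Lip.minorDoubleMatrix φ1 φ2 z g k 1 (Sum.inl (I', J')) -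
          Lip.minorDoubleMatrix φ1 φ2 z g k 0 (Sum.inl (I', J')) *
            Lip.minorDoubleMatrix φ1 φ2 z g k 1 (Sum.inl (I, J))
          = (φ2 mu * (φ1 lam - φ2 lam) - φ2 lam * (φ1 mu - φ2 mu)) * G := by
        show φ1 _ * φ2 _ - φ1 _ * φ2 _ = _
        rw [← hlam, ← hmu, hG]
        simp only [map_mul]
        ring
      rw [hd]
      refine Ideal.mul_mem_mul ?_ (Ideal.subset_span rfl)
      exact sub_mem (Ideal.mul_mem_left _ _ (hz lam)) (Ideal.mul_mem_left _ _ (hz mu))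
    · -- inl inr
      obtain ⟨lam, hlam⟩ := hminor I J
      obtain ⟨mu, hmu⟩ := hminor K' L'
      have hd : Lip.minorDoubleMatrix φ1 φ2 z g k 0 (Sum.inl (I, J)) *
            Lip.minorDoubleMatrix φ1 φ2 z g k 1 (Sum.inr (i', (K', L'))) -
          Lip.minorDoubleMatrix φ1 φ2 z g k 0 (Sum.inr (i', (K', L'))) *
            Lip.minorDoubleMatrix φ1 φ2 z g k 1 (Sum.inl (I, J))
          = ((φ1 lam * φ2 mu) * δ i') * G := by
        show φ1 _ * ((φ1 (z i') - φ2 (z i')) * φ2 _) - 0 * φ2 _ = _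
        rw [← hlam, ← hmu, hG, hδ]
        simp only [map_mul]
        ring
      rw [hd]
      refine Ideal.mul_mem_mul ?_ (Ideal.subset_span rfl)
      exact Ideal.mul_mem_left _ _ (Ideal.subset_span ⟨i', rfl⟩)
    · -- inr inl
      obtain ⟨lam, hlam⟩ := hminor K L
      obtain ⟨mu, hmu⟩ := hminor I' J'
      have hd : Lip.minorDoubleMatrix φ1 φ2 z g k 0 (Sum.inr (i, (K, L))) *
            Lip.minorDoubleMatrix φ1 φ2 z g k 1 (Sum.inl (I', J')) -
          Lip.minorDoubleMatrix φ1 φ2 z g k 0 (Sum.inl (I', J')) *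
            Lip.minorDoubleMatrix φ1 φ2 z g k 1 (Sum.inr (i, (K, L)))
          = (-(φ1 mu * φ2 lam) * δ i) * G := by
        show 0 * φ2 _ - φ1 _ * ((φ1 (z i) - φ2 (z i)) * φ2 _) = _
        rw [← hlam, ← hmu, hG, hδ]
        simp only [map_mul]
        ring
      rw [hd]
      refine Ideal.mul_mem_mul ?_ (Ideal.subset_span rfl)
      exact Ideal.mul_mem_left _ _ (Ideal.subset_span ⟨i, rfl⟩)
    · -- inr inr
      have hd : Lip.minorDoubleMatrix φ1 φ2 z g k 0 (Sum.inr (i, (K, L))) *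
            Lip.minorDoubleMatrix φ1 φ2 z g k 1 (Sum.inr (i', (K', L'))) -
          Lip.minorDoubleMatrix φ1 φ2 z g k 0 (Sum.inr (i', (K', L'))) *
            Lip.minorDoubleMatrix φ1 φ2 z g k 1 (Sum.inr (i, (K, L)))
          = 0 := by
        show 0 * _ - 0 * _ = 0
        ring
      rw [hd]
      exact zero_mem _
  -- Step 3 : products of k diagonal generators times G are 2k×2k minors
  have step3 : Ideal.span {s : S | ∃ i : Fin k → Fin n, s = (∏ b, δ (i b)) * G}
      ≤ Lip.I2k φ1 φ2 z g k := by
    rw [Ideal.span_le]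
    rintro s ⟨i, rfl⟩
    set E : Fin (2 * k) ≃ Fin k ⊕ Fin k :=
      (finCongr (two_mul k)).trans finSumFinEquiv.symm with hE
    refine Ideal.subset_span
      ⟨fun a => Sum.map I0 I0 (E a),
       fun a => Sum.map J0 (fun b => (i b, J0 b)) (E a), ?_⟩
    have hmat : (Matrix.of fun a b : Fin (2 * k) =>
        Lip.doubleMatrix φ1 φ2 z g (Sum.map I0 I0 (E a))
          (Sum.map J0 (fun b => (i b, J0 b)) (E b)))
        = (Matrix.fromBlocks
            (Matrix.of fun a b : Fin k => φ1 (g (J0 b) (I0 a)))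
            0
            (Matrix.of fun a b : Fin k => φ2 (g (J0 b) (I0 a)))
            (Matrix.of fun a b : Fin k =>
              δ (i b) * φ2 (g (J0 b) (I0 a)))).submatrix E E := by
      ext a b
      rcases ha : E a with a' | a' <;> rcases hb : E b with b' | b' <;>
        simp [Matrix.submatrix, ha, hb, Lip.doubleMatrix, Matrix.fromBlocks, hδ]
    rw [hmat, Matrix.det_submatrix_equiv_self, Matrix.det_fromBlocks_zero₁₂,
      Matrix.det_mul_row (fun b => δ (i b)) (fun a b : Fin k => φ2 (g (J0 b) (I0 a)))]
    have h1 : (Matrix.of fun a b : Fin k => φ1 (g (J0 b) (I0 a))).det = φ1 g0 := by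
      rw [hg0, RingHom.map_det]; rfl
    have h2 : (Matrix.of fun a b : Fin k => φ2 (g (J0 b) (I0 a))).det = φ2 g0 := by
      rw [hg0, RingHom.map_det]; rfl
    have h2' : Matrix.det (fun a b : Fin k => φ2 (g (J0 b) (I0 a))) = φ2 g0 := h2
    rw [h1, h2', hG]
    ring
  -- chain everything together
  calc IΔ ^ (k - 1) * Lip.I2 (Lip.minorDoubleMatrix φ1 φ2 z g k)
      ≤ IΔ ^ (k - 1) * (IΔ * Ideal.span {G}) := Ideal.mul_mono_right step1
    _ = IΔ ^ (k - 1 + 1) * Ideal.span {G} := by ring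
    _ ≤ IΔ ^ k * Ideal.span {G} :=
        Ideal.mul_mono_left (Ideal.pow_le_pow_right (by omega))
    _ ≤ Ideal.span {s : S | ∃ i : Fin k → Fin n, s = (∏ b, δ (i b)) * G} :=
        aux_pow_span_le δ G k
    _ ≤ Lip.I2k φ1 φ2 z g k := step3
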